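/- Let Φ and Φₙ be quantum channels with Φ = Φₙⁿ. Then spec(Φ) = {μⁿ : μ ∈ spec(Φₙ)}, and the peripheral eigenprojection of Φ equals the peripheral eigenprojection of Φₙ; in particular Attr(Φ) = Attr(Φₙ). -/

import Mathlib

open Matrix
open scoped ComplexOrder

/-- The algebra of `d × d` complex matrices. -/
abbrev Mat (d : ℕ) := Matrix (Fin d) (Fin d) ℂ

/-- A linear map on matrices is positive if it maps positive semidefinite matrices to
positive semidefinite matrices. -/
def IsPositiveMap {d : ℕ} (Φ : Module.End ℂ (Mat d)) : Prop :=
  ∀ X : Mat d, X.PosSemidef → (Φ X).PosSemidef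

/-- A linear map on matrices is trace-preserving. -/
def IsTracePreserving {d : ℕ} (Φ : Module.End ℂ (Mat d)) : Prop :=
  ∀ X : Mat d, (Φ X).trace = X.trace

/-- The block-wise application `(Φ ⊗ id_n)(X)` of `Φ` to a matrix on `ℂ^d ⊗ ℂ^n`. -/
def blockApply {d : ℕ} (Φ : Module.End ℂ (Mat d)) (n : ℕ)
    (X : Matrix (Fin d × Fin n) (Fin d × Fin n) ℂ) :
    Matrix (Fin d × Fin n) (Fin d × Fin n) ℂ :=
  Matrix.of fun p q => Φ (Matrix.of fun i j => X (i, p.2) (j, q.2)) p.1 q.1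

/-- Complete positivity: `Φ ⊗ id_n` is positive for every `n`. -/
def IsCompletelyPositive {d : ℕ} (Φ : Module.End ℂ (Mat d)) : Prop :=
  ∀ (n : ℕ) (X : Matrix (Fin d × Fin n) (Fin d × Fin n) ℂ),
    X.PosSemidef → (blockApply Φ n X).PosSemidef

/-- The attractor (peripheral) subspace: the span of eigenvectors corresponding to
eigenvalues of modulus one. -/
noncomputable def attrSubspace {d : ℕ} (Φ : Module.End ℂ (Mat d)) : Submodule ℂ (Mat d) :=
  ⨆ (μ : ℂ) (_ : ‖μ‖ = 1), Module.End.eigenspace Φ μ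

/-- The peripheral eigenprojection of `Φ`: the spectral projection whose range is the
attractor subspace and whose kernel is the sum of the generalized eigenspaces for the
non-peripheral eigenvalues. -/
def IsPeriphProj {d : ℕ} (Φ Q : Module.End ℂ (Mat d)) : Prop :=
  Q ∘ₗ Q = Q ∧
  LinearMap.range Q = attrSubspace Φ ∧
  LinearMap.ker Q =
    ⨆ (μ : ℂ) (_ : ‖μ‖ ≠ 1), Module.End.maxGenEigenspace Φ μ


section Aux

open Polynomial Module

variable {V : Type*} [AddCommGroup V] [Module ℂ V] [FiniteDimensional ℂ V]

private lemma abs_eq_one_of_pow {a : ℝ} (ha : 0 ≤ a) {n : ℕ} (hn : 0 < n)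
    (h : a ^ n = 1) : a = 1 := by
  rcases lt_trichotomy a 1 with h1 | h1 | h1
  · have := pow_lt_one₀ ha h1 hn.ne'
    linarith
  · exact h1
  · have := one_lt_pow₀ h1 hn.ne'
    linarith

private lemma eigenspace_le_pow (f : Module.End ℂ V) (μ : ℂ) (n : ℕ) :
    f.eigenspace μ ≤ (f ^ n).eigenspace (μ ^ n) := by
  intro x hx
  rw [Module.End.mem_eigenspace_iff] at hx ⊢
  induction n with
  | zero => simp
  | succ m ih =>
      rw [pow_succ, pow_succ, Module.End.mul_apply, hx, _root_.map_smul, ih, smul_smul, mul_comm]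

private lemma maxGen_le_pow (f : Module.End ℂ V) (μ : ℂ) (n : ℕ) :
    f.maxGenEigenspace μ ≤ (f ^ n).maxGenEigenspace (μ ^ n) := by
  intro x hx
  rw [Module.End.mem_maxGenEigenspace] at hx ⊢
  obtain ⟨k, hk⟩ := hx
  refine ⟨k, ?_⟩
  have hdvd : (X - C μ) ^ k ∣ (X ^ n - C (μ ^ n)) ^ k :=
    pow_dvd_pow_of_dvd (dvd_iff_isRoot.mpr (by simp)) k
  obtain ⟨q, hq⟩ := hdvd
  have h1 : Polynomial.aeval f ((X - C μ) ^ k) x = 0 := by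
    have he : Polynomial.aeval f ((X - C μ) ^ k) = (f - μ • 1) ^ k := by
      rw [map_pow, map_sub, Polynomial.aeval_X, Polynomial.aeval_C,
        Module.algebraMap_end_eq_smul_id, Module.End.one_eq_id]
    rw [he]; exact hk
  have h2 : Polynomial.aeval f ((X ^ n - C (μ ^ n)) ^ k) x = 0 := by
    rw [hq, mul_comm ((X - C μ) ^ k) q, _root_.map_mul, Module.End.mul_apply, h1, map_zero]
  have he2 : Polynomial.aeval f ((X ^ n - C (μ ^ n)) ^ k) = (f ^ n - μ ^ n • 1) ^ k := by
    rw [map_pow, map_sub, Polynomial.aeval_X_pow, Polynomial.aeval_C,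
      Module.algebraMap_end_eq_smul_id, Module.End.one_eq_id]
  rwa [he2] at h2

private lemma maxGen_pow_le (f : Module.End ℂ V) (n : ℕ) (lam : ℂ) :
    (f ^ n).maxGenEigenspace lam ≤ ⨆ (μ : ℂ) (_ : μ ^ n = lam), f.maxGenEigenspace μ := by
  set p := (f ^ n).maxGenEigenspace lam with hp
  have hcomm : Commute (f ^ n) f := (Commute.refl f).pow_left n
  have hfp : ∀ x ∈ p, f x ∈ p := fun x hx =>
    Module.End.mapsTo_maxGenEigenspace_of_comm hcomm lam hx
  set g : Module.End ℂ p := f.restrict hfp with hg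
  intro x hx
  have hmem : (⟨x, hx⟩ : p) ∈ (⊤ : Submodule ℂ p) := trivial
  rw [← Module.End.iSup_maxGenEigenspace_eq_top g] at hmem
  have hx2 : x ∈ Submodule.map p.subtype (⨆ μ : ℂ, g.maxGenEigenspace μ) :=
    ⟨⟨x, hx⟩, hmem, rfl⟩
  rw [Submodule.map_iSup] at hx2
  refine (iSup_le fun μ => ?_ : (⨆ μ : ℂ, Submodule.map p.subtype (g.maxGenEigenspace μ)) ≤ _) hx2
  have hres : g.maxGenEigenspace μ = Submodule.comap p.subtype (f.maxGenEigenspace μ) :=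
    Module.End.genEigenspace_restrict f p ⊤ μ hfp
  rw [hres, Submodule.map_comap_subtype]
  by_cases hμ : μ ^ n = lam
  · exact le_trans inf_le_right
      (le_iSup₂ (f := fun (μ : ℂ) (_ : μ ^ n = lam) => f.maxGenEigenspace μ) μ hμ)
  · have hdis : Disjoint p (f.maxGenEigenspace μ) :=
      Disjoint.mono_right (maxGen_le_pow f μ n)
        (Module.End.disjoint_genEigenspace (f ^ n) (Ne.symm hμ) ⊤ ⊤)
    rw [disjoint_iff.mp hdis]
    exact bot_le

private lemma eigen_pow_le (f : Module.End ℂ V) {n : ℕ} (hn : 0 < n) {lam : ℂ}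
    (hlam : lam ≠ 0) :
    (f ^ n).eigenspace lam ≤ ⨆ (μ : ℂ) (_ : μ ^ n = lam), f.eigenspace μ := by
  set p := (f ^ n).eigenspace lam with hp
  have hcomm : Commute (f ^ n) f := (Commute.refl f).pow_left n
  have hfp : ∀ x ∈ p, f x ∈ p := fun x hx =>
    Module.End.mapsTo_genEigenspace_of_comm hcomm lam 1 hx
  set g : Module.End ℂ p := f.restrict hfp with hg
  have hgn : Polynomial.aeval g (X ^ n - C lam) = 0 := by
    rw [map_sub, Polynomial.aeval_X_pow, Polynomial.aeval_C]
    ext y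
    have hy : (f ^ n) (y : V) = lam • (y : V) := Module.End.mem_eigenspace_iff.mp y.2
    simp only [LinearMap.sub_apply, hg, Module.End.pow_restrict n hfp, LinearMap.zero_apply,
      Module.algebraMap_end_eq_smul_id, LinearMap.smul_apply, LinearMap.id_apply]
    simp [LinearMap.restrict_apply, hy]
  have hsq : Squarefree (X ^ n - C lam : ℂ[X]) :=
    (Polynomial.separable_X_pow_sub_C lam (Nat.cast_ne_zero.mpr hn.ne') hlam).squarefree
  have hss : g.IsFinitelySemisimple :=
    (Module.End.isSemisimple_of_squarefree_aeval_eq_zero hsq hgn).isFinitelySemisimple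
  intro x hx
  have hmem : (⟨x, hx⟩ : p) ∈ (⊤ : Submodule ℂ p) := trivial
  rw [← Module.End.iSup_maxGenEigenspace_eq_top g] at hmem
  have hx2 : x ∈ Submodule.map p.subtype (⨆ μ : ℂ, g.maxGenEigenspace μ) :=
    ⟨⟨x, hx⟩, hmem, rfl⟩
  rw [Submodule.map_iSup] at hx2
  refine (iSup_le fun μ => ?_ : (⨆ μ : ℂ, Submodule.map p.subtype (g.maxGenEigenspace μ)) ≤ _) hx2
  rw [hss.maxGenEigenspace_eq_eigenspace μ]
  have hres : g.eigenspace μ = Submodule.comap p.subtype (f.eigenspace μ) :=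
    Module.End.genEigenspace_restrict f p 1 μ hfp
  rw [hres, Submodule.map_comap_subtype]
  by_cases hμ : μ ^ n = lam
  · exact le_trans inf_le_right
      (le_iSup₂ (f := fun (μ : ℂ) (_ : μ ^ n = lam) => f.eigenspace μ) μ hμ)
  · have hdis : Disjoint p (f.eigenspace μ) :=
      Disjoint.mono_right (eigenspace_le_pow f μ n)
        (Module.End.disjoint_genEigenspace (f ^ n) (Ne.symm hμ) 1 1)
    rw [disjoint_iff.mp hdis]
    exact bot_le

end Aux

/-- If `Φ` and `Φₙ` are quantum channels with `Φ = Φₙⁿ` (`n ≥ 1`), then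
`spec(Φ) = {μⁿ : μ ∈ spec(Φₙ)}`, the peripheral eigenprojections of `Φ` and `Φₙ`
coincide, and `Attr(Φ) = Attr(Φₙ)`. -/
theorem spec_and_periphProj_of_nth_root
    (d n : ℕ) (hn : 0 < n) (Φ Φn : Module.End ℂ (Mat d))
    (hCP : IsCompletelyPositive Φ) (hTP : IsTracePreserving Φ)
    (hCPn : IsCompletelyPositive Φn) (hTPn : IsTracePreserving Φn)
    (hroot : Φn ^ n = Φ) :
    spectrum ℂ Φ = (fun μ : ℂ => μ ^ n) '' spectrum ℂ Φn ∧
    (∀ Q : Module.End ℂ (Mat d), IsPeriphProj Φ Q ↔ IsPeriphProj Φn Q) ∧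
    attrSubspace Φ = attrSubspace Φn := by
  subst hroot
  have habs : ∀ μ : ℂ, ‖μ ^ n‖ = 1 ↔ ‖μ‖ = 1 := by
    intro μ
    rw [norm_pow]
    exact ⟨fun h => abs_eq_one_of_pow (norm_nonneg μ) hn h, fun h => by rw [h, one_pow]⟩
  have hA : attrSubspace (Φn ^ n) = attrSubspace Φn := by
    unfold attrSubspace
    apply le_antisymm
    · refine iSup₂_le fun lam hlam => ?_
      have hlam0 : lam ≠ 0 := fun h => by simp [h] at hlam
      refine le_trans (eigen_pow_le Φn hn hlam0) (iSup₂_le fun μ hμ => ?_)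
      have hμ1 : ‖μ‖ = 1 := (habs μ).mp (by rw [hμ]; exact hlam)
      exact le_iSup₂ (f := fun (μ : ℂ) (_ : ‖μ‖ = 1) => Module.End.eigenspace Φn μ) μ hμ1
    · refine iSup₂_le fun μ hμ => ?_
      refine le_trans (eigenspace_le_pow Φn μ n) ?_
      exact le_iSup₂ (f := fun (ν : ℂ) (_ : ‖ν‖ = 1) =>
        Module.End.eigenspace (Φn ^ n) ν) (μ ^ n) ((habs μ).mpr hμ)
  have hK : (⨆ (μ : ℂ) (_ : ‖μ‖ ≠ 1), Module.End.maxGenEigenspace (Φn ^ n) μ) =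
      ⨆ (μ : ℂ) (_ : ‖μ‖ ≠ 1), Module.End.maxGenEigenspace Φn μ := by
    apply le_antisymm
    · refine iSup₂_le fun lam hlam => ?_
      refine le_trans (maxGen_pow_le Φn n lam) (iSup₂_le fun μ hμ => ?_)
      have hμ1 : ‖μ‖ ≠ 1 := fun h => hlam (by rw [← hμ]; exact (habs μ).mpr h)
      exact le_iSup₂ (f := fun (μ : ℂ) (_ : ‖μ‖ ≠ 1) =>
        Module.End.maxGenEigenspace Φn μ) μ hμ1
    · refine iSup₂_le fun μ hμ => ?_
      refine le_trans (maxGen_le_pow Φn μ n) ?_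
      exact le_iSup₂ (f := fun (ν : ℂ) (_ : ‖ν‖ ≠ 1) =>
        Module.End.maxGenEigenspace (Φn ^ n) ν) (μ ^ n) (fun h => hμ ((habs μ).mp h))
  refine ⟨spectrum.map_pow_of_pos Φn hn, fun Q => ?_, hA⟩
  unfold IsPeriphProj
  rw [hA, hK]
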